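/- arXiv:1706.05986 — 3 statements merged into one kernel-verified Lean document; each statement's English description precedes it below -/
import Mathlib

section
/- Let I ⊆ ℝ be an open interval, let ε, ε̃ ∈ {1, −1} with ε·ε̃ = −1, and let h : I → ℝ be continuously differentiable. Then for every s₀ ∈ I, every f₀ ∈ ℝ, and every f₁ ∈ (−1, 1), there exists a twice continuously differentiable function f : I → ℝ satisfying f''(s) = (ε̃ + ε·(f'(s))²)·(1 − h(s)·f'(s)) for all s ∈ I, with f(s₀) = f₀ and f'(s₀) = f₁. -/
open Set Filter Topology


lemma tanh_hasDerivAt (x : ℝ) : HasDerivAt Real.tanh (1 - Real.tanh x ^ 2) x := by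
  have hc : (0:ℝ) < Real.cosh x := Real.cosh_pos x
  have h1 : HasDerivAt (fun y => Real.sinh y / Real.cosh y)
      ((Real.cosh x * Real.cosh x - Real.sinh x * Real.sinh x) / Real.cosh x ^ 2) x :=
    (Real.hasDerivAt_sinh x).div (Real.hasDerivAt_cosh x) hc.ne'
  have h2 : Real.tanh = fun y => Real.sinh y / Real.cosh y := by
    funext y; exact Real.tanh_eq_sinh_div_cosh y
  rw [h2]
  convert h1 using 1
  have := Real.cosh_sq_sub_sinh_sq x
  field_simp [Real.tanh_eq_sinh_div_cosh, hc.ne']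

lemma abs_tanh_lt_one (x : ℝ) : |Real.tanh x| < 1 := by
  have hc : (0:ℝ) < Real.cosh x := Real.cosh_pos x
  have h := Real.cosh_sq_sub_sinh_sq x
  rw [Real.tanh_eq_sinh_div_cosh, abs_div, abs_of_pos hc, div_lt_one hc]
  nlinarith [abs_nonneg (Real.sinh x), sq_abs (Real.sinh x)]

lemma tanh_lipschitzWith : LipschitzWith 1 Real.tanh := by
  apply lipschitzWith_of_nnnorm_deriv_le (fun x => (tanh_hasDerivAt x).differentiableAt)
  intro x
  rw [(tanh_hasDerivAt x).deriv]
  rw [← NNReal.coe_le_coe, coe_nnnorm, Real.norm_eq_abs, NNReal.coe_one]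
  have := abs_tanh_lt_one x
  rw [abs_lt] at this
  rw [abs_le]
  constructor <;> nlinarith [this.1, this.2]

lemma continuous_tanh : Continuous Real.tanh :=
  (Differentiable.continuous (fun x => (tanh_hasDerivAt x).differentiableAt))

lemma exists_tanh_eq {t : ℝ} (ht : t ∈ Set.Ioo (-1:ℝ) 1) : ∃ y, Real.tanh y = t := by
  obtain ⟨h1, h2⟩ := ht
  have hpos : 0 < (1 + t) / (1 - t) := by
    apply div_pos <;> linarith
  refine ⟨Real.log ((1 + t) / (1 - t)) / 2, ?_⟩
  set y := Real.log ((1 + t) / (1 - t)) / 2 with hy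
  have hE : Real.exp y > 0 := Real.exp_pos y
  have hE2 : Real.exp y * Real.exp y = (1 + t) / (1 - t) := by
    rw [← Real.exp_add, ← Real.exp_log hpos]
    congr 1; rw [hy]; ring
  rw [Real.tanh_eq_sinh_div_cosh, Real.sinh_eq, Real.cosh_eq, Real.exp_neg]
  have h1t : (1:ℝ) - t ≠ 0 := by linarith
  have hden : Real.exp y * Real.exp y + 1 > 0 := by positivity
  rw [div_div_div_comm]
  field_simp at hE2 ⊢
  nlinarith [hE2, hE]

lemma soliton_lipschitz (ε c H : ℝ) (hε : |ε| = 1) (hc : |c| ≤ H) :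
    LipschitzWith H.toNNReal (fun y => ε * (c * Real.tanh y - 1)) := by
  have hH : 0 ≤ H := le_trans (abs_nonneg c) hc
  apply LipschitzWith.of_dist_le_mul
  intro x y
  have htl : |Real.tanh x - Real.tanh y| ≤ |x - y| := by
    have := tanh_lipschitzWith.dist_le_mul x y
    rwa [Real.dist_eq, Real.dist_eq, NNReal.coe_one, one_mul] at this
  rw [Real.dist_eq, Real.dist_eq, Real.coe_toNNReal H hH]
  have : ε * (c * Real.tanh x - 1) - ε * (c * Real.tanh y - 1)
      = ε * c * (Real.tanh x - Real.tanh y) := by ring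
  rw [this, abs_mul, abs_mul, hε, one_mul]
  calc |c| * |Real.tanh x - Real.tanh y| ≤ H * |x - y| := by
        apply mul_le_mul hc htl (abs_nonneg _) hH

lemma soliton_exists_Icc (ε : ℝ) (hε : |ε| = 1) (h : ℝ → ℝ) {a b s₀ : ℝ}
    (hc : ContinuousOn h (Icc a b)) (hs₀ : s₀ ∈ Icc a b) (y₀ : ℝ) :
    ∃ w : ℝ → ℝ, w s₀ = y₀ ∧ ∀ t ∈ Icc a b,
      HasDerivWithinAt w (ε * (h t * Real.tanh (w t) - 1)) (Icc a b) t := by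
  obtain ⟨C, hC⟩ := (isCompact_Icc (a := a) (b := b)).exists_bound_of_continuousOn hc
  set H : ℝ := max C 0 with hH
  have hH0 : 0 ≤ H := le_max_right _ _
  have hbd : ∀ t ∈ Icc a b, |h t| ≤ H := fun t ht => le_trans (by
    simpa [Real.norm_eq_abs] using hC t ht) (le_max_left _ _)
  set Cb : ℝ := H + 1 with hCb
  set R : ℝ := Cb * max (b - s₀) (s₀ - a) with hR
  have hmax0 : 0 ≤ max (b - s₀) (s₀ - a) := le_trans (by linarith [hs₀.2]) (le_max_left _ _)
  have hCb0 : 0 ≤ Cb := by linarith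
  have hR0 : 0 ≤ R := mul_nonneg hCb0 hmax0
  have hpl : IsPicardLindelof (fun t y => ε * (h t * Real.tanh y - 1)) (tmin := a) (tmax := b)
      ⟨s₀, hs₀⟩ y₀ R.toNNReal 0 Cb.toNNReal H.toNNReal := by
    constructor
    · intro t ht
      exact (soliton_lipschitz ε (h t) H hε (hbd t ht)).lipschitzOnWith
    · intro x _
      exact (continuousOn_const.mul ((hc.mul continuousOn_const).sub continuousOn_const))
    · intro t ht x _
      rw [Real.coe_toNNReal _ hCb0]
      rw [Real.norm_eq_abs, abs_mul, hε, one_mul]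
      have h1 : |h t * Real.tanh x - 1| ≤ |h t| * |Real.tanh x| + 1 := by
        calc |h t * Real.tanh x - 1| ≤ |h t * Real.tanh x| + 1 := by
              have := abs_sub_abs_le_abs_sub (h t * Real.tanh x) 1
              have := abs_sub (h t * Real.tanh x) 1
              calc |h t * Real.tanh x - 1| ≤ |h t * Real.tanh x| + |(1:ℝ)| := abs_sub _ _
                _ = |h t * Real.tanh x| + 1 := by rw [abs_one]
          _ = |h t| * |Real.tanh x| + 1 := by rw [abs_mul]
      have h2 : |h t| * |Real.tanh x| ≤ H := by
        calc |h t| * |Real.tanh x| ≤ H * 1 :=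
              mul_le_mul (hbd t ht) (abs_tanh_lt_one x).le (abs_nonneg _) hH0
          _ = H := mul_one H
      linarith
    · rw [NNReal.coe_zero, sub_zero, Real.coe_toNNReal _ hCb0, Real.coe_toNNReal _ hR0]
  exact hpl.exists_eq_forall_mem_Icc_hasDerivWithinAt₀

lemma soliton_unique (ε : ℝ) (hε : |ε| = 1) (h : ℝ → ℝ) {a b s₀ : ℝ}
    (hs₀ : s₀ ∈ Ioo a b) (hc : ContinuousOn h (Icc a b)) {w₁ w₂ : ℝ → ℝ}
    (hw₁c : ContinuousOn w₁ (Icc a b))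
    (hw₁ : ∀ t ∈ Ioo a b, HasDerivAt w₁ (ε * (h t * Real.tanh (w₁ t) - 1)) t)
    (hw₂c : ContinuousOn w₂ (Icc a b))
    (hw₂ : ∀ t ∈ Ioo a b, HasDerivAt w₂ (ε * (h t * Real.tanh (w₂ t) - 1)) t)
    (hinit : w₁ s₀ = w₂ s₀) : EqOn w₁ w₂ (Icc a b) := by
  have hab : a ≤ b := le_of_lt (lt_trans hs₀.1 hs₀.2)
  set cl : ℝ → ℝ := fun t => max a (min t b) with hcl
  have hclmem : ∀ t, cl t ∈ Icc a b := fun t =>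
    ⟨le_max_left _ _, max_le hab (min_le_right _ _)⟩
  have hcleq : ∀ t ∈ Icc a b, cl t = t := fun t ht => by
    rw [hcl]; simp only; rw [min_eq_left ht.2, max_eq_right ht.1]
  obtain ⟨C, hC⟩ := (isCompact_Icc (a := a) (b := b)).exists_bound_of_continuousOn hc
  set H : ℝ := max C 0 with hH
  have hbd : ∀ t ∈ Icc a b, |h t| ≤ H := fun t ht => le_trans (by
    simpa [Real.norm_eq_abs] using hC t ht) (le_max_left _ _)
  set V : ℝ → ℝ → ℝ := fun t y => ε * (h (cl t) * Real.tanh y - 1) with hV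
  have hlip : ∀ t, LipschitzOnWith H.toNNReal (V t) univ :=
    fun t => (soliton_lipschitz ε (h (cl t)) H hε (hbd _ (hclmem t))).lipschitzOnWith
  have key := ODE_solution_unique_of_mem_Icc (fun t _ => hlip t) hs₀ hw₁c
    (fun t ht => by rw [hV]; simp only; rw [hcleq t (Ioo_subset_Icc_self ht)]; exact hw₁ t ht)
    (fun t _ => mem_univ _) hw₂c
    (fun t ht => by rw [hV]; simp only; rw [hcleq t (Ioo_subset_Icc_self ht)]; exact hw₂ t ht)
    (fun t _ => mem_univ _) hinit
  exact key

/-- In the case `ε·ε̃ = −1`, the translating soliton ODE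
`f'' = (ε̃ + ε (f')²)(1 − h f')` has a globally defined solution on the whole open
interval `I` for every initial data `f(s₀) = f₀`, `f'(s₀) = f₁ ∈ (−1, 1)`. -/
theorem global_existence_mixed_signs
    (I : Set ℝ) (hIopen : IsOpen I) (hIconn : I.OrdConnected)
    (ε ε' : ℝ) (hε : ε = 1 ∨ ε = -1) (hε' : ε' = 1 ∨ ε' = -1)
    (hmix : ε * ε' = -1)
    (h : ℝ → ℝ) (hC1 : ContDiffOn ℝ 1 h I) :
    ∀ s₀ ∈ I, ∀ f₀ : ℝ, ∀ f₁ ∈ Set.Ioo (-1 : ℝ) 1,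
      ∃ f : ℝ → ℝ,
        ContDiffOn ℝ 2 f I ∧
        (∀ s ∈ I, deriv (deriv f) s =
          (ε' + ε * (deriv f s) ^ 2) * (1 - h s * deriv f s)) ∧
        f s₀ = f₀ ∧ deriv f s₀ = f₁ := by
  classical
  intro s₀ hs₀ f₀ f₁ hf₁
  have hεabs : |ε| = 1 := by rcases hε with rfl | rfl <;> norm_num
  have hε'neg : ε' = -ε := by
    rcases hε with rfl | rfl <;> rcases hε' with rfl | rfl <;> linarith
  obtain ⟨y₀, hy₀⟩ := exists_tanh_eq hf₁
  have key : ∀ s ∈ I, ∃ a, ∃ b, ∃ w : ℝ → ℝ, a ∈ I ∧ b ∈ I ∧ a < min s s₀ ∧ max s s₀ < b ∧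
      w s₀ = y₀ ∧ ∀ t ∈ Icc a b,
        HasDerivWithinAt w (ε * (h t * Real.tanh (w t) - 1)) (Icc a b) t := by
    intro s hs
    have hmin : min s s₀ ∈ I := by
      rcases min_cases s s₀ with ⟨h1, _⟩ | ⟨h1, _⟩ <;> rw [h1] <;> assumption
    have hmax : max s s₀ ∈ I := by
      rcases max_cases s s₀ with ⟨h1, _⟩ | ⟨h1, _⟩ <;> rw [h1] <;> assumption
    obtain ⟨l, u, hlu, hsub⟩ := mem_nhds_iff_exists_Ioo_subset.mp (hIopen.mem_nhds hmin)
    obtain ⟨l', u', hlu', hsub'⟩ := mem_nhds_iff_exists_Ioo_subset.mp (hIopen.mem_nhds hmax)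
    set a : ℝ := (l + min s s₀) / 2 with hadef
    set b : ℝ := (max s s₀ + u') / 2 with hbdef
    have hal : a < min s s₀ := by rw [hadef]; linarith [hlu.1]
    have hbu : max s s₀ < b := by rw [hbdef]; linarith [hlu'.2]
    have haI : a ∈ I := hsub ⟨by rw [hadef]; linarith [hlu.1], lt_of_lt_of_le hal hlu.2.le⟩
    have hbI : b ∈ I := hsub' ⟨lt_of_le_of_lt hlu'.1.le hbu, by rw [hbdef]; linarith [hlu'.2]⟩
    have hs₀ab : s₀ ∈ Icc a b :=
      ⟨(hal.trans_le (min_le_right s s₀)).le, ((le_max_right s s₀).trans_lt hbu).le⟩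
    obtain ⟨w, hw0, hw⟩ := soliton_exists_Icc ε hεabs h
      (hC1.continuousOn.mono (hIconn.out haI hbI)) hs₀ab y₀
    exact ⟨a, b, w, haI, hbI, hal, hbu, hw0, hw⟩
  choose a b w ha hb hamin hbmax hw0 hw using key
  have hIcc : ∀ s (hs : s ∈ I), Icc (a s hs) (b s hs) ⊆ I :=
    fun s hs => hIconn.out (ha s hs) (hb s hs)
  have hsIoo : ∀ s (hs : s ∈ I), s ∈ Ioo (a s hs) (b s hs) := fun s hs =>
    ⟨(hamin s hs).trans_le (min_le_left s s₀), (le_max_left s s₀).trans_lt (hbmax s hs)⟩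
  have hs₀Ioo : ∀ s (hs : s ∈ I), s₀ ∈ Ioo (a s hs) (b s hs) := fun s hs =>
    ⟨(hamin s hs).trans_le (min_le_right s s₀), (le_max_right s s₀).trans_lt (hbmax s hs)⟩
  have hwc : ∀ s (hs : s ∈ I), ContinuousOn (w s hs) (Icc (a s hs) (b s hs)) :=
    fun s hs t ht => (hw s hs t ht).continuousWithinAt
  have agree : ∀ s (hs : s ∈ I), ∀ t, ∀ ht : t ∈ Icc (a s hs) (b s hs),
      w t (hIcc s hs ht) t = w s hs t := by
    intro s hs t ht
    have ht' : t ∈ I := hIcc s hs ht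
    set A : ℝ := max (a s hs) (a t ht') with hA
    set B : ℝ := min (b s hs) (b t ht') with hB
    have hsubs : Icc A B ⊆ Icc (a s hs) (b s hs) :=
      Icc_subset_Icc (le_max_left _ _) (min_le_left _ _)
    have hsubt : Icc A B ⊆ Icc (a t ht') (b t ht') :=
      Icc_subset_Icc (le_max_right _ _) (min_le_right _ _)
    have hs₀AB : s₀ ∈ Ioo A B :=
      ⟨max_lt (hs₀Ioo s hs).1 (hs₀Ioo t ht').1, lt_min (hs₀Ioo s hs).2 (hs₀Ioo t ht').2⟩
    have hds : ∀ τ ∈ Ioo A B, HasDerivAt (w s hs) (ε * (h τ * Real.tanh (w s hs τ) - 1)) τ := by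
      intro τ hτ
      exact (hw s hs τ (hsubs (Ioo_subset_Icc_self hτ))).hasDerivAt
        (Icc_mem_nhds ((le_max_left _ _).trans_lt hτ.1) (hτ.2.trans_le (min_le_left _ _)))
    have hdt : ∀ τ ∈ Ioo A B, HasDerivAt (w t ht') (ε * (h τ * Real.tanh (w t ht' τ) - 1)) τ := by
      intro τ hτ
      exact (hw t ht' τ (hsubt (Ioo_subset_Icc_self hτ))).hasDerivAt
        (Icc_mem_nhds ((le_max_right _ _).trans_lt hτ.1) (hτ.2.trans_le (min_le_right _ _)))
    have huniq := soliton_unique ε hεabs h hs₀AB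
      (hC1.continuousOn.mono ((hsubs.trans (hIcc s hs))))
      ((hwc t ht').mono hsubt) hdt ((hwc s hs).mono hsubs) hds
      ((hw0 t ht').trans (hw0 s hs).symm)
    exact huniq ⟨max_le ht.1 ((hamin t ht').trans_le (min_le_left t s₀)).le,
      le_min ht.2 ((le_max_left t s₀).trans_lt (hbmax t ht')).le⟩
  set v : ℝ → ℝ := fun s => if hs : s ∈ I then w s hs s else 0 with hvdef
  have hvI : ∀ s (hs : s ∈ I), v s = w s hs s := fun s hs => dif_pos hs
  have hvderiv : ∀ s (hs : s ∈ I), HasDerivAt v (ε * (h s * Real.tanh (v s) - 1)) s := by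
    intro s hs
    have hsb := hsIoo s hs
    have hd : HasDerivAt (w s hs) (ε * (h s * Real.tanh (w s hs s) - 1)) s :=
      (hw s hs s (Ioo_subset_Icc_self hsb)).hasDerivAt (Icc_mem_nhds hsb.1 hsb.2)
    have hee : v =ᶠ[𝓝 s] w s hs := by
      filter_upwards [Ioo_mem_nhds hsb.1 hsb.2] with t ht
      have ht2 : t ∈ Icc (a s hs) (b s hs) := Ioo_subset_Icc_self ht
      rw [hvI t (hIcc s hs ht2)]
      exact agree s hs t ht2
    rw [hvI s hs]
    exact hd.congr_of_eventuallyEq hee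
  have hvcont : ContinuousOn v I := fun s hs => (hvderiv s hs).continuousAt.continuousWithinAt
  set u : ℝ → ℝ := fun t => Real.tanh (v t) with hudef
  have hucont : ContinuousOn u I := continuous_tanh.comp_continuousOn hvcont
  have huderiv : ∀ s (hs : s ∈ I),
      HasDerivAt u ((1 - Real.tanh (v s) ^ 2) * (ε * (h s * Real.tanh (v s) - 1))) s :=
    fun s hs => (tanh_hasDerivAt (v s)).comp s (hvderiv s hs)
  set f : ℝ → ℝ := fun s => f₀ + ∫ t in s₀..s, Real.tanh (v t) with hfdef
  have hfderiv : ∀ s (hs : s ∈ I), HasDerivAt f (u s) s := by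
    intro s hs
    have huIcc : uIcc s₀ s ⊆ I := by
      rw [uIcc]
      apply hIconn.out
      · rcases min_cases s₀ s with ⟨h1, _⟩ | ⟨h1, _⟩ <;> rw [h1] <;> assumption
      · rcases max_cases s₀ s with ⟨h1, _⟩ | ⟨h1, _⟩ <;> rw [h1] <;> assumption
    have hint : IntervalIntegrable u MeasureTheory.volume s₀ s :=
      (hucont.mono huIcc).intervalIntegrable
    have hmeas := ContinuousOn.stronglyMeasurableAtFilter (μ := MeasureTheory.volume) hIopen hucont s hs
    have hca : ContinuousAt u s := hucont.continuousAt (hIopen.mem_nhds hs)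
    exact (intervalIntegral.integral_hasDerivAt_right hint hmeas hca).const_add f₀
  have hdf : ∀ s (hs : s ∈ I), deriv f s = u s := fun s hs => (hfderiv s hs).deriv
  have hAcont : ContinuousOn
      (fun s => (1 - Real.tanh (v s) ^ 2) * (ε * (h s * Real.tanh (v s) - 1))) I := by
    have h1 : ContinuousOn (fun s => Real.tanh (v s)) I := continuous_tanh.comp_continuousOn hvcont
    exact (continuousOn_const.sub (h1.pow 2)).mul
      (continuousOn_const.mul ((hC1.continuousOn.mul h1).sub continuousOn_const))
  refine ⟨f, ?_, ?_, ?_, ?_⟩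
  · -- ContDiffOn ℝ 2 f I
    have hucd : ContDiffOn ℝ 1 u I := by
      rw [show (1 : WithTop ℕ∞) = 0 + 1 by norm_num,
        contDiffOn_succ_iff_deriv_of_isOpen hIopen]
      refine ⟨fun s hs => (huderiv s hs).differentiableAt.differentiableWithinAt, ?_, ?_⟩
      · intro hcon; simp at hcon
      · rw [contDiffOn_zero]
        exact hAcont.congr (fun s hs => (huderiv s hs).deriv)
    rw [show (2 : WithTop ℕ∞) = 1 + 1 by norm_num,
      contDiffOn_succ_iff_deriv_of_isOpen hIopen]
    refine ⟨fun s hs => (hfderiv s hs).differentiableAt.differentiableWithinAt, ?_,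
      hucd.congr (fun s hs => hdf s hs)⟩
    · intro hcon; simp at hcon
  · intro s hs
    have hdd : deriv f =ᶠ[𝓝 s] u := by
      filter_upwards [hIopen.mem_nhds hs] with t ht; exact hdf t ht
    rw [hdd.deriv_eq, (huderiv s hs).deriv, hdf s hs, hε'neg]
    simp only [hudef]
    ring
  · show f₀ + ∫ t in s₀..s₀, Real.tanh (v t) = f₀
    rw [intervalIntegral.integral_same, add_zero]
  · rw [hdf s₀ hs₀]
    show Real.tanh (v s₀) = f₁
    rw [(hvI s₀ hs₀).trans (hw0 s₀ hs₀), hy₀]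
end

section
/- Let I ⊆ ℝ be an open interval, let h : I → ℝ be continuous, let c ∈ I and λ > 1, and set a = c + arcoth(λ) (the inverse hyperbolic cotangent of λ). Assume h(s) ≤ 0 for every s ∈ I with s ≥ c, and that sup I > a. Then there is no twice continuously differentiable function f : [c, a] → ℝ satisfying f''(s) = (−1 + (f'(s))²)·(1 − h(s)·f'(s)) for all s ∈ [c, a] with f'(c) = λ; that is, every such solution blows up before a. -/
open Set Filter

/-- The inverse hyperbolic cotangent, `arcoth x = (1/2)·ln((x+1)/(x−1))` for `x > 1`. -/
noncomputable def arcoth (x : ℝ) : ℝ := (1 / 2) * Real.log ((x + 1) / (x - 1))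

lemma arcoth_pos {x : ℝ} (hx : 1 < x) : 0 < arcoth x := by
  unfold arcoth
  have h1 : (0:ℝ) < x - 1 := by linarith
  have : (1:ℝ) < (x + 1) / (x - 1) := by
    rw [lt_div_iff₀ h1]; linarith
  have := Real.log_pos this
  linarith

lemma arcoth_strictAnti {x y : ℝ} (hx : 1 < x) (hxy : x < y) : arcoth y < arcoth x := by
  unfold arcoth
  have h1 : (0:ℝ) < x - 1 := by linarith
  have h2 : (0:ℝ) < y - 1 := by linarith
  have hyp : (0:ℝ) < (y + 1) / (y - 1) := div_pos (by linarith) h2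
  have hkey : (y + 1) / (y - 1) < (x + 1) / (x - 1) := by
    rw [div_lt_div_iff₀ h2 h1]; nlinarith
  have := Real.log_lt_log hyp hkey
  linarith

lemma arcoth_hasDerivAt {x : ℝ} (hx : 1 < x) : HasDerivAt arcoth (1 / (1 - x ^ 2)) x := by
  have h1 : x + 1 ≠ 0 := by linarith
  have h2 : x - 1 ≠ 0 := by linarith
  have hlog1 : HasDerivAt (fun y : ℝ => Real.log (y + 1)) (x + 1)⁻¹ x := by
    have := (Real.hasDerivAt_log h1).comp x ((hasDerivAt_id x).add_const 1)
    simpa [Function.comp_def] using this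
  have hlog2 : HasDerivAt (fun y : ℝ => Real.log (y - 1)) (x - 1)⁻¹ x := by
    have := (Real.hasDerivAt_log h2).comp x ((hasDerivAt_id x).sub_const 1)
    simpa [Function.comp_def] using this
  have hG : HasDerivAt (fun y : ℝ => (1/2) * (Real.log (y + 1) - Real.log (y - 1)))
      ((1/2) * ((x + 1)⁻¹ - (x - 1)⁻¹)) x := ((hlog1.sub hlog2).const_mul (1/2))
  have heq : arcoth =ᶠ[nhds x] fun y => (1/2) * (Real.log (y + 1) - Real.log (y - 1)) := by
    filter_upwards [eventually_gt_nhds hx] with y hy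
    unfold arcoth
    rw [Real.log_div (by linarith) (by linarith)]
  have h3 : (1:ℝ) - x ^ 2 ≠ 0 := by nlinarith
  have hval : (1:ℝ) / (1 - x ^ 2) = (1/2) * ((x + 1)⁻¹ - (x - 1)⁻¹) := by
    field_simp
    ring
  rw [hval]
  exact hG.congr_of_eventuallyEq heq

lemma arcoth_continuousAt {x : ℝ} (hx : 1 < x) : ContinuousAt arcoth x :=
  (arcoth_hasDerivAt hx).continuousAt

/-- Finite time blow up for `f'' = (−1 + (f')²)(1 − h f')` with
`f'(c) = λ > 1` and `h ≤ 0` on `I ∩ [c, ∞)`: no `C²` solution exists on all of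
`[c, a]` where `a = c + arcoth(λ)`. -/
theorem blow_up_case_eps_one_epstilde_neg_one
    (I : Set ℝ) (hIopen : IsOpen I) (hIconn : I.OrdConnected)
    (h : ℝ → ℝ) (hcont : ContinuousOn h I)
    (c : ℝ) (hc : c ∈ I) (l : ℝ) (hl : 1 < l)
    (a : ℝ) (ha : a = c + arcoth l)
    (hneg : ∀ s ∈ I, c ≤ s → h s ≤ 0)
    (hsup : ∃ s ∈ I, a < s) :
    ¬ ∃ f : ℝ → ℝ,
      ContDiffOn ℝ 2 f (Set.Icc c a) ∧
      (∀ s ∈ Set.Icc c a,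
        derivWithin (derivWithin f (Set.Icc c a)) (Set.Icc c a) s =
          (-1 + (derivWithin f (Set.Icc c a) s) ^ 2) *
            (1 - h s * derivWithin f (Set.Icc c a) s)) ∧
      derivWithin f (Set.Icc c a) c = l := by
  rintro ⟨f, hf, hode, hfc⟩
  have hca : c < a := by
    rw [ha]; linarith [arcoth_pos hl]
  set J := Set.Icc c a with hJ
  set g := derivWithin f J with hg
  have hJI : J ⊆ I := by
    obtain ⟨s₀, hs₀, has₀⟩ := hsup
    exact fun t ht => hIconn.out hc hs₀ ⟨ht.1, le_trans ht.2 has₀.le⟩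
  have hUD : UniqueDiffOn ℝ J := uniqueDiffOn_Icc hca
  have hg1 : ContDiffOn ℝ 1 g J := hf.derivWithin hUD (by norm_num)
  have hgc : ContinuousOn g J := hg1.continuousOn
  have hgd : ∀ s ∈ J, HasDerivWithinAt g ((-1 + (g s) ^ 2) * (1 - h s * g s)) J s := by
    intro s hs
    have hd := (hg1.differentiableOn one_ne_zero s hs).hasDerivWithinAt
    rwa [hode s hs] at hd
  -- key claim: if g > 1 on [c, b] then arcoth (g b) + b ≤ arcoth l + c
  have key : ∀ b, c < b → b ≤ a → (∀ s ∈ Set.Icc c b, 1 < g s) →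
      arcoth (g b) + b ≤ arcoth l + c := by
    intro b hcb hba hpos
    set F := fun s => arcoth (g s) + s with hF
    have hsub : Set.Icc c b ⊆ J := Set.Icc_subset_Icc le_rfl hba
    have hFc : ContinuousOn F (Set.Icc c b) := by
      apply ContinuousOn.add _ continuousOn_id
      intro s hs
      exact ((arcoth_continuousAt (hpos s hs)).comp_continuousWithinAt
        ((hgc.mono hsub) s hs))
    have hint : interior (Set.Icc c b) = Set.Ioo c b := interior_Icc
    have hF' : ∀ s ∈ Set.Ioo c b, HasDerivAt F (h s * g s) s := by
      intro s hs
      have hsJ : s ∈ J := hsub (Set.Ioo_subset_Icc_self hs)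
      have hmem : J ∈ nhds s := Icc_mem_nhds hs.1 (lt_of_lt_of_le hs.2 hba)
      have hgds : HasDerivAt g ((-1 + (g s) ^ 2) * (1 - h s * g s)) s :=
        (hgd s hsJ).hasDerivAt hmem
      have hx : 1 < g s := hpos s (Set.Ioo_subset_Icc_self hs)
      have hcomp := (arcoth_hasDerivAt hx).comp s hgds
      have heq : (1 / (1 - (g s) ^ 2)) * ((-1 + (g s) ^ 2) * (1 - h s * g s)) + 1
          = h s * g s := by
        have : (1:ℝ) - (g s) ^ 2 ≠ 0 := by nlinarith
        field_simp
        ring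
      have := hcomp.add (hasDerivAt_id s)
      rw [heq] at this
      exact this
    have hanti : AntitoneOn F (Set.Icc c b) := by
      apply antitoneOn_of_deriv_nonpos (convex_Icc c b) hFc
      · rw [hint]
        exact fun s hs => (hF' s hs).differentiableAt.differentiableWithinAt
      · rw [hint]
        intro s hs
        rw [(hF' s hs).deriv]
        have hsJ : s ∈ J := hsub (Set.Ioo_subset_Icc_self hs)
        have hh : h s ≤ 0 := hneg s (hJI hsJ) hsJ.1
        have hx : (0:ℝ) < g s := lt_trans one_pos (hpos s (Set.Ioo_subset_Icc_self hs))
        exact mul_nonpos_of_nonpos_of_nonneg hh hx.le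
    have := hanti (Set.left_mem_Icc.2 (le_of_lt hcb)) (Set.right_mem_Icc.2 (le_of_lt hcb)) hcb.le
    simpa [hF, hfc] using this
  -- g > 1 on all of J
  have hallpos : ∀ s ∈ J, 1 < g s := by
    by_contra hcon
    push_neg at hcon
    set T := J ∩ g ⁻¹' (Set.Iic 1) with hT
    have hTne : T.Nonempty := by
      obtain ⟨s, hs, hle⟩ := hcon
      exact ⟨s, hs, hle⟩
    have hTclosed : IsClosed T := hgc.preimage_isClosed_of_isClosed isClosed_Icc isClosed_Iic
    have hTbdd : BddBelow T := ⟨c, fun t ht => ht.1.1⟩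
    set t₀ := sInf T with ht₀
    have ht₀T : t₀ ∈ T := hTclosed.csInf_mem hTne hTbdd
    have hgt₀ : g t₀ ≤ 1 := ht₀T.2
    have ht₀J : t₀ ∈ J := ht₀T.1
    have hct₀ : c < t₀ := by
      rcases lt_or_eq_of_le ht₀J.1 with hlt | heq
      · exact hlt
      · exfalso
        rw [← heq] at hgt₀
        have hgcl : g c = l := hfc
        linarith
    have hlo : ∀ t ∈ Set.Ioo c t₀, l ≤ g t := by
      intro t ht
      have hpos : ∀ s ∈ Set.Icc c t, 1 < g s := by
        intro s hs
        by_contra hns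
        push_neg at hns
        have hsT : s ∈ T := ⟨⟨hs.1, le_trans hs.2 (le_trans ht.2.le ht₀J.2)⟩, hns⟩
        have := csInf_le hTbdd hsT
        have : t₀ ≤ t := le_trans this hs.2
        exact absurd ht.2 (not_lt.2 this)
      have hkey := key t ht.1 (le_trans ht.2.le ht₀J.2) hpos
      have harz : arcoth (g t) ≤ arcoth l + c - t := by linarith
      have h1t : 1 < g t := hpos t ⟨ht.1.le, le_rfl⟩
      by_contra hnl
      push_neg at hnl
      have hct : c < t := ht.1
      have := arcoth_strictAnti h1t hnl
      linarith
    -- take limit t → t₀ from the left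
    have hne : (nhdsWithin t₀ (Set.Ioo c t₀)).NeBot := right_nhdsWithin_Ioo_neBot hct₀
    have htend : Tendsto g (nhdsWithin t₀ (Set.Ioo c t₀)) (nhds (g t₀)) := by
      have : ContinuousWithinAt g J t₀ := hgc t₀ ht₀J
      exact this.mono (fun x hx => ⟨hx.1.le, le_trans hx.2.le ht₀J.2⟩)
    have : l ≤ g t₀ := by
      apply ge_of_tendsto htend
      filter_upwards [eventually_mem_nhdsWithin] with t ht using hlo t ht
    linarith
  -- final contradiction
  have hfin := key a hca le_rfl hallpos
  have hga : 1 < g a := hallpos a ⟨hca.le, le_rfl⟩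
  have := arcoth_pos hga
  linarith [hfin, this, ha]
end

section
/- Let I ⊆ ℝ be an open interval, let h : I → ℝ be continuous, let c ∈ I and λ > 0, and set a = c + 1/λ. Assume h(s) > 0 for every s ∈ I with s ≥ c, and that sup I > a. Then there is no twice continuously differentiable function f : [c, a] → ℝ satisfying f''(s) = −(1 + (f'(s))²)·(1 − h(s)·f'(s)) for all s ∈ [c, a] with f'(c) = −λ; that is, every such solution blows up before a. -/
open Set Filter

/-- Finite time blow up for `f'' = −(1 + (f')²)(1 − h f')` with
`f'(c) = −λ`, `λ > 0` and `h > 0` on `I ∩ [c, ∞)`: no `C²` solution exists on all of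
`[c, a]` where `a = c + 1/λ`. -/
theorem blow_up_case_eps_neg_one_epstilde_neg_one
    (I : Set ℝ) (hIopen : IsOpen I) (hIconn : I.OrdConnected)
    (h : ℝ → ℝ) (hcont : ContinuousOn h I)
    (c : ℝ) (hc : c ∈ I) (l : ℝ) (hl : 0 < l)
    (a : ℝ) (ha : a = c + 1 / l)
    (hpos : ∀ s ∈ I, c ≤ s → 0 < h s)
    (hsup : ∃ s ∈ I, a < s) :
    ¬ ∃ f : ℝ → ℝ,
      ContDiffOn ℝ 2 f (Set.Icc c a) ∧
      (∀ s ∈ Set.Icc c a,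
        derivWithin (derivWithin f (Set.Icc c a)) (Set.Icc c a) s =
          -((1 + (derivWithin f (Set.Icc c a) s) ^ 2) *
            (1 - h s * derivWithin f (Set.Icc c a) s))) ∧
      derivWithin f (Set.Icc c a) c = -l := by
  rintro ⟨f, hf, hode, hfc⟩
  have hl' : 0 < 1 / l := by positivity
  have hca : c < a := by rw [ha]; linarith
  have hIccI : Set.Icc c a ⊆ I := by
    obtain ⟨s₀, hs₀I, hs₀⟩ := hsup
    exact (Set.Icc_subset_Icc_right hs₀.le).trans (hIconn.out hc hs₀I)
  set g := derivWithin f (Set.Icc c a) with hgdef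
  have hhpos : ∀ s ∈ Set.Icc c a, 0 < h s := fun s hs => hpos s (hIccI hs) hs.1
  have hUD : UniqueDiffOn ℝ (Set.Icc c a) := uniqueDiffOn_Icc hca
  have hg1 : ContDiffOn ℝ 1 g (Set.Icc c a) := hf.derivWithin hUD (by norm_num)
  have hgc : ContinuousOn g (Set.Icc c a) := hg1.continuousOn
  have hgd : ∀ s ∈ Set.Icc c a, HasDerivWithinAt g
      (-((1 + g s ^ 2) * (1 - h s * g s))) (Set.Icc c a) s := by
    intro s hs
    have := (hg1.differentiableOn one_ne_zero s hs).hasDerivWithinAt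
    rwa [hode s hs] at this
  -- Step 1: g < 0 on [c, a]
  have key : ∀ s ∈ Set.Icc c a, g s < 0 := by
    by_contra hcon
    push_neg at hcon
    obtain ⟨t, ht, hgt⟩ := hcon
    have hZclosed : IsClosed (Set.Icc c a ∩ g ⁻¹' Set.Ici 0) :=
      hgc.preimage_isClosed_of_isClosed isClosed_Icc isClosed_Ici
    have hZne : (Set.Icc c a ∩ g ⁻¹' Set.Ici 0).Nonempty := ⟨t, ht, hgt⟩
    have hZbdd : BddBelow (Set.Icc c a ∩ g ⁻¹' Set.Ici 0) :=
      (bddBelow_Icc).mono (Set.inter_subset_left)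
    set t₀ := sInf (Set.Icc c a ∩ g ⁻¹' Set.Ici 0) with ht₀def
    have ht₀mem : t₀ ∈ Set.Icc c a ∩ g ⁻¹' Set.Ici 0 :=
      hZclosed.csInf_mem hZne hZbdd
    have hgt₀ : 0 ≤ g t₀ := ht₀mem.2
    have ht₀Icc : t₀ ∈ Set.Icc c a := ht₀mem.1
    have hct₀ : c < t₀ := by
      rcases lt_or_eq_of_le ht₀Icc.1 with h' | h'
      · exact h'
      · exfalso; rw [← h'] at hgt₀; rw [hfc] at hgt₀; linarith
    have hneg : ∀ s ∈ Set.Icc c a, s < t₀ → g s < 0 := by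
      intro s hs hst₀
      by_contra hge
      push_neg at hge
      have : t₀ ≤ s := csInf_le hZbdd ⟨hs, hge⟩
      linarith
    -- g strictly decreasing on [c, t₀]
    have hanti : StrictAntiOn g (Set.Icc c t₀) := by
      apply strictAntiOn_of_deriv_neg (convex_Icc c t₀)
        (hgc.mono (Set.Icc_subset_Icc_right ht₀Icc.2))
      intro x hx
      rw [interior_Icc] at hx
      have hxIcc : x ∈ Set.Icc c a := ⟨hx.1.le, hx.2.le.trans ht₀Icc.2⟩
      have hx' : x < a := lt_of_lt_of_le hx.2 ht₀Icc.2
      have hder : HasDerivAt g (-((1 + g x ^ 2) * (1 - h x * g x))) x :=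
        (hgd x hxIcc).hasDerivAt (Icc_mem_nhds hx.1 hx')
      rw [hder.deriv]
      have h1 : g x < 0 := hneg x hxIcc hx.2
      have h2 : 0 < h x := hhpos x hxIcc
      nlinarith [sq_nonneg (g x), mul_pos h2 (neg_pos.mpr h1)]
    have : g t₀ < g c :=
      hanti (Set.left_mem_Icc.mpr ht₀Icc.1) (Set.right_mem_Icc.mpr ht₀Icc.1) hct₀
    rw [hfc] at this
    linarith
  -- Step 2: v s = s - (g s)⁻¹ is antitone
  have hgne : ∀ s ∈ Set.Icc c a, g s ≠ 0 := fun s hs => (key s hs).ne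
  set v : ℝ → ℝ := fun s => s - (g s)⁻¹ with hvdef
  have hvd : ∀ s ∈ Set.Icc c a, HasDerivWithinAt v
      (1 - (-(-((1 + g s ^ 2) * (1 - h s * g s))) / g s ^ 2)) (Set.Icc c a) s := by
    intro s hs
    exact (hasDerivWithinAt_id s _).sub (((hgd s hs).inv (hgne s hs)))
  have hvderiv_nonpos : ∀ s ∈ Set.Icc c a,
      1 - (-(-((1 + g s ^ 2) * (1 - h s * g s))) / g s ^ 2) ≤ 0 := by
    intro s hs
    have h1 : g s < 0 := key s hs
    have h2 : 0 < h s := hhpos s hs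
    have hsq : 0 < g s ^ 2 := pow_two_pos_of_ne_zero h1.ne
    rw [sub_nonpos, neg_neg, le_div_iff₀ hsq, one_mul]
    nlinarith [mul_pos h2 (neg_pos.mpr h1), sq_nonneg (g s)]
  have hvanti : AntitoneOn v (Set.Icc c a) := by
    apply antitoneOn_of_deriv_nonpos (convex_Icc c a)
    · exact (continuousOn_id).sub (hgc.inv₀ hgne)
    · intro x hx
      rw [interior_Icc] at hx
      exact ((hvd x (Set.Ioo_subset_Icc_self hx)).hasDerivAt
        (Icc_mem_nhds hx.1 hx.2)).differentiableAt.differentiableWithinAt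
    · intro x hx
      rw [interior_Icc] at hx
      have hder := ((hvd x (Set.Ioo_subset_Icc_self hx)).hasDerivAt
        (Icc_mem_nhds hx.1 hx.2)).deriv
      rw [hder]
      exact hvderiv_nonpos x (Set.Ioo_subset_Icc_self hx)
  have hva : v a ≤ v c :=
    hvanti (Set.left_mem_Icc.mpr hca.le) (Set.right_mem_Icc.mpr hca.le) hca.le
  have hvc : v c = a := by
    simp only [hvdef, hfc]
    rw [ha, inv_neg, sub_neg_eq_add, one_div]
  have hga : g a < 0 := key a (Set.right_mem_Icc.mpr hca.le)
  have hinv : (g a)⁻¹ < 0 := inv_neg''.mpr hga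
  rw [hvc] at hva
  simp only [hvdef] at hva
  linarith
end
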